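/- arXiv:2308.06342 — 2 statements merged into one kernel-verified Lean document; each statement's English description precedes it below -/
import Mathlib

section
/- For any two probability distributions p and q on a finite set, the Kullback–Leibler divergence satisfies D_KL(p ∥ q) ≥ (1/2)·‖p − q‖₁², where ‖·‖₁ is the L1 norm (Pinsker's inequality). -/
open Finset Real Set

/-- `log x ≥ 1 - 1/x` for `x > 0`. -/
lemma log_ge (x : ℝ) (hx : 0 < x) : 1 - x⁻¹ ≤ Real.log x := by
  have h := Real.log_le_sub_one_of_pos (inv_pos.mpr hx)
  rw [Real.log_inv] at h
  linarith

/-- `h(x) = (x+1) log x - 2(x-1)` is monotone on `(0,∞)`. -/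
lemma h_mono : MonotoneOn (fun x : ℝ => (x + 1) * Real.log x - 2 * (x - 1)) (Ioi 0) := by
  have hderiv : ∀ x ∈ interior (Ioi (0:ℝ)),
      0 ≤ deriv (fun x : ℝ => (x + 1) * Real.log x - 2 * (x - 1)) x := by
    intro x hx
    rw [interior_Ioi] at hx
    have hx0 : (0:ℝ) < x := hx
    have hd : HasDerivAt (fun x : ℝ => (x + 1) * Real.log x - 2 * (x - 1))
        (Real.log x + x⁻¹ - 1) x := by
      have h1 : HasDerivAt (fun x : ℝ => (x + 1) * Real.log x)
          (1 * Real.log x + (x + 1) * x⁻¹) x := by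
        exact (hasDerivAt_id x |>.add_const 1).mul (Real.hasDerivAt_log hx0.ne')
      have h2 : HasDerivAt (fun x : ℝ => 2 * (x - 1)) 2 x := by
        simpa using ((hasDerivAt_id x).sub_const 1).const_mul 2
      have := h1.sub h2
      refine this.congr_deriv ?_
      field_simp
      ring
    rw [hd.deriv]
    have := log_ge x hx0
    linarith
  apply monotoneOn_of_deriv_nonneg (convex_Ioi 0) _ _ hderiv
  · apply ContinuousOn.sub
    · exact (continuousOn_id.add continuousOn_const).mul
        (Real.continuousOn_log.mono (by intro x hx; exact ne_of_gt hx))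
    · exact continuousOn_const.mul (continuousOn_id.sub continuousOn_const)
  · intro x hx
    rw [interior_Ioi] at hx
    apply DifferentiableAt.differentiableWithinAt
    exact ((differentiableAt_id.add_const 1).mul (Real.differentiableAt_log (ne_of_gt hx))).sub
      ((differentiableAt_id.sub_const 1).const_mul 2)

lemma g_hasDeriv (x : ℝ) (hx : 0 < x) :
    HasDerivAt (fun x : ℝ => 2 * (x + 2) * (x * Real.log x - x + 1) - 3 * (x - 1) ^ 2)
      (4 * ((x + 1) * Real.log x - 2 * (x - 1))) x := by
  have hu : HasDerivAt (fun x : ℝ => x * Real.log x - x + 1) (Real.log x) x := by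
    have h1 : HasDerivAt (fun x : ℝ => x * Real.log x) (1 * Real.log x + x * x⁻¹) x :=
      (hasDerivAt_id x).mul (Real.hasDerivAt_log hx.ne')
    have := (h1.sub (hasDerivAt_id x)).add_const 1
    refine this.congr_deriv ?_
    field_simp
    ring
  have hv : HasDerivAt (fun x : ℝ => 2 * (x + 2)) 2 x := by
    simpa using ((hasDerivAt_id x).add_const 2).const_mul 2
  have hq : HasDerivAt (fun x : ℝ => 3 * (x - 1) ^ 2) (3 * (2 * (x - 1))) x := by
    have := (((hasDerivAt_id x).sub_const 1).pow 2).const_mul 3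
    simpa using this
  have := (hv.mul hu).sub hq
  refine this.congr_deriv ?_
  ring

/-- Key pointwise inequality: `3(x-1)² ≤ 2(x+2)(x log x - x + 1)` for `x ≥ 0`. -/
lemma key (x : ℝ) (hx : 0 ≤ x) :
    3 * (x - 1) ^ 2 ≤ 2 * (x + 2) * (x * Real.log x - x + 1) := by
  set g : ℝ → ℝ := fun x => 2 * (x + 2) * (x * Real.log x - x + 1) - 3 * (x - 1) ^ 2 with hg
  rcases eq_or_lt_of_le hx with rfl | hx0
  · norm_num
  suffices h : 0 ≤ g x by simpa [hg] using h
  have hg1 : g 1 = 0 := by simp [hg]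
  have hcont : ∀ s : Set ℝ, s ⊆ Ioi 0 → ContinuousOn g s := by
    intro s hs
    apply ContinuousOn.sub
    · apply ContinuousOn.mul
      · exact continuousOn_const.mul (continuousOn_id.add continuousOn_const)
      · apply ContinuousOn.add (ContinuousOn.sub _ continuousOn_id) continuousOn_const
        exact continuousOn_id.mul (Real.continuousOn_log.mono
          (fun y hy => ne_of_gt (hs hy)))
    · exact continuousOn_const.mul ((continuousOn_id.sub continuousOn_const).pow 2)
  have hdiff : ∀ y : ℝ, 0 < y → DifferentiableAt ℝ g y :=
    fun y hy => (g_hasDeriv y hy).differentiableAt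
  have h1 : ((1:ℝ) + 1) * Real.log 1 - 2 * (1 - 1) = 0 := by simp
  rcases le_or_gt 1 x with hx1 | hx1
  · -- monotone on Ici 1
    have hmono : MonotoneOn g (Ici 1) := by
      apply monotoneOn_of_deriv_nonneg (convex_Ici 1)
        (hcont _ (fun y hy => show (0:ℝ) < y from lt_of_lt_of_le one_pos hy))
      · intro y hy
        rw [interior_Ici] at hy
        exact (hdiff y (lt_trans one_pos hy)).differentiableWithinAt
      · intro y hy
        rw [interior_Ici] at hy
        rw [(g_hasDeriv y (lt_trans one_pos hy)).deriv]
        have := h_mono (Set.mem_Ioi.mpr one_pos) (Set.mem_Ioi.mpr (lt_trans one_pos hy)) hy.le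
        simp only [Real.log_one] at this
        nlinarith
    have := hmono (Set.mem_Ici.mpr le_rfl) (Set.mem_Ici.mpr hx1) hx1
    rw [hg1] at this
    exact this
  · -- antitone on Ioc 0 1
    have hanti : AntitoneOn g (Ioc 0 1) := by
      apply antitoneOn_of_deriv_nonpos (convex_Ioc 0 1)
        (hcont _ (fun y hy => hy.1))
      · intro y hy
        rw [interior_Ioc] at hy
        exact (hdiff y hy.1).differentiableWithinAt
      · intro y hy
        rw [interior_Ioc] at hy
        rw [(g_hasDeriv y hy.1).deriv]
        have := h_mono (Set.mem_Ioi.mpr hy.1) (Set.mem_Ioi.mpr one_pos) hy.2.le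
        simp only [Real.log_one] at this
        nlinarith
    have := hanti (Set.mem_Ioc.mpr ⟨hx0, hx1.le⟩) (Set.mem_Ioc.mpr ⟨one_pos, le_rfl⟩) hx1.le
    rw [hg1] at this
    exact this

/-- Per-index inequality: `3(p-q)² ≤ 2(p+2q)(p log(p/q) - p + q)`. -/
lemma keyC (p q : ℝ) (hp : 0 ≤ p) (hq : 0 ≤ q) (hpq : 0 < p → 0 < q) :
    3 * (p - q) ^ 2 ≤ 2 * (p + 2 * q) * (p * Real.log (p / q) - p + q) := by
  rcases eq_or_lt_of_le hq with rfl | hq0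
  · have hp0 : p = 0 := by
      by_contra h
      exact absurd (hpq (lt_of_le_of_ne hp (Ne.symm h))) (lt_irrefl 0)
    simp [hp0]
  rcases eq_or_lt_of_le hp with rfl | hp0
  · have h0 : (0:ℝ) * Real.log (0 / q) = 0 := by simp
    nlinarith
  · have hx : (0:ℝ) ≤ p / q := div_nonneg hp hq0.le
    have hk := key (p / q) hx
    have hlog : Real.log (p / q / 1) = Real.log (p / q) := by norm_num
    have hpq' : p / q * q = p := div_mul_cancel₀ p hq0.ne'
    have := mul_le_mul_of_nonneg_left hk (sq_nonneg q)
    have hexp : q ^ 2 * (2 * (p / q + 2) * (p / q * Real.log (p / q) - p / q + 1))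
        = 2 * (p + 2 * q) * (p * Real.log (p / q) - p + q) := by
      field_simp
    have hexp2 : q ^ 2 * (3 * (p / q - 1) ^ 2) = 3 * (p - q) ^ 2 := by
      field_simp
    rw [hexp, hexp2] at this
    exact this

/-- Pinsker's inequality for probability mass functions on `Fin d`. -/
theorem pinsker_inequality (d : ℕ) (p q : Fin d → ℝ)
    (hp0 : ∀ i, 0 ≤ p i) (hp1 : ∑ i, p i = 1)
    (hq0 : ∀ i, 0 ≤ q i) (hq1 : ∑ i, q i = 1)
    (hpq : ∀ i, 0 < p i → 0 < q i) :
    (∑ i, p i * Real.log (p i / q i)) ≥ (1 / 2) * (∑ i, |p i - q i|) ^ 2 := by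
  set u : Fin d → ℝ := fun i => Real.sqrt (p i + 2 * q i) with hu
  set v : Fin d → ℝ := fun i => |p i - q i| / Real.sqrt (p i + 2 * q i) with hv
  have hs : ∀ i, 0 ≤ p i + 2 * q i := fun i => by linarith [hp0 i, hq0 i]
  have huv : ∀ i, u i * v i = |p i - q i| := by
    intro i
    rcases eq_or_lt_of_le (hs i) with h | h
    · have hpz : p i = 0 := by linarith [hp0 i, hq0 i]
      have hqz : q i = 0 := by linarith [hp0 i, hq0 i]
      simp [hu, hv, hpz, hqz]
    · have hsq : 0 < Real.sqrt (p i + 2 * q i) := Real.sqrt_pos.mpr h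
      simp only [hu, hv]
      field_simp
  have hCS := Finset.sum_mul_sq_le_sq_mul_sq Finset.univ u v
  have hT : ∑ i, u i * v i = ∑ i, |p i - q i| := Finset.sum_congr rfl (fun i _ => huv i)
  have hU : ∑ i, u i ^ 2 = 3 := by
    have : ∀ i : Fin d, u i ^ 2 = p i + 2 * q i := fun i => Real.sq_sqrt (hs i)
    rw [Finset.sum_congr rfl (fun i _ => this i), Finset.sum_add_distrib, hp1,
      ← Finset.mul_sum, hq1]
    norm_num
  have hV : ∑ i, v i ^ 2 ≤ (2 / 3) * ∑ i, (p i * Real.log (p i / q i) - p i + q i) := by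
    rw [Finset.mul_sum]
    apply Finset.sum_le_sum
    intro i _
    have hC := keyC (p i) (q i) (hp0 i) (hq0 i) (hpq i)
    rcases eq_or_lt_of_le (hs i) with h | h
    · have hpz : p i = 0 := by linarith [hp0 i, hq0 i]
      have hqz : q i = 0 := by linarith [hp0 i, hq0 i]
      simp [hv, hpz, hqz]
    · have hv2 : v i ^ 2 = (p i - q i) ^ 2 / (p i + 2 * q i) := by
        simp only [hv, div_pow, sq_abs, Real.sq_sqrt (hs i)]
      rw [hv2, div_le_iff₀ h]
      nlinarith
  have hsum3 : ∑ i, (p i * Real.log (p i / q i) - p i + q i)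
      = ∑ i, p i * Real.log (p i / q i) := by
    rw [Finset.sum_add_distrib, Finset.sum_sub_distrib, hp1, hq1]
    ring
  rw [hT, hU] at hCS
  rw [hsum3] at hV
  have h23 : (0:ℝ) ≤ 3 := by norm_num
  nlinarith [hCS, hV]
end

section
/- The negative entropy function φ(x) = Σᵢ xᵢ ln xᵢ on the probability simplex is 1-strongly convex with respect to the L1 norm: for all x, y in the simplex with x having strictly positive entries, φ(y) ≥ φ(x) + ⟨∇φ(x), y − x⟩ + (1/2)‖y − x‖₁². -/
open Finset Real

/-- Key scalar inequality: `log t ≥ (t-1)(5t+1)/(2t(t+2))` for `t > 0`. -/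
lemma log_ge_rat (t : ℝ) (ht : 0 < t) :
    (t - 1) * (5 * t + 1) / (2 * t * (t + 2)) ≤ Real.log t := by
  set g : ℝ → ℝ := fun s => Real.log s - (s - 1) * (5 * s + 1) / (2 * s * (s + 2)) with hg
  have hderiv : ∀ s : ℝ, 0 < s →
      HasDerivAt g ((s - 1) ^ 3 / (s ^ 2 * (s + 2) ^ 2)) s := by
    intro s hs
    have hs' : s ≠ 0 := hs.ne'
    have hden : 2 * s * (s + 2) ≠ 0 := by positivity
    have h1 : HasDerivAt (fun u : ℝ => Real.log u) s⁻¹ s := Real.hasDerivAt_log hs'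
    have h2 : HasDerivAt (fun u : ℝ => (u - 1) * (5 * u + 1)) (10 * s - 4) s := by
      have := ((hasDerivAt_id s).sub_const 1).mul
        (((hasDerivAt_id s).const_mul 5).add_const 1)
      refine this.congr_deriv ?_; simp only [id_eq]; ring
    have h3 : HasDerivAt (fun u : ℝ => 2 * u * (u + 2)) (4 * s + 4) s := by
      have := (((hasDerivAt_id s).const_mul 2)).mul ((hasDerivAt_id s).add_const 2)
      refine this.congr_deriv ?_; simp only [id_eq]; ring
    have h4 := h1.sub (h2.div h3 hden)
    refine h4.congr_deriv ?_
    field_simp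
    ring
  have hg1 : g 1 = 0 := by simp [hg]
  rw [← sub_nonneg, ← hg1]
  show g 1 ≤ g t
  rcases le_total 1 t with h | h
  · have hmono : MonotoneOn g (Set.Ici (1 : ℝ)) := by
      apply monotoneOn_of_deriv_nonneg (convex_Ici 1)
      · intro s hs
        exact ((hderiv s (lt_of_lt_of_le one_pos hs)).continuousAt).continuousWithinAt
      · intro s hs
        rw [interior_Ici] at hs
        exact ((hderiv s (lt_trans one_pos hs)).differentiableAt).differentiableWithinAt
      · intro s hs
        rw [interior_Ici] at hs
        rw [(hderiv s (lt_trans one_pos hs)).deriv]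
        have h1 : (0:ℝ) ≤ (s - 1) ^ 3 := pow_nonneg (by linarith [Set.mem_Ioi.mp hs]) 3
        exact div_nonneg h1 (by positivity)
    exact hmono Set.self_mem_Ici h h
  · have hanti : AntitoneOn g (Set.Ioc (0 : ℝ) 1) := by
      apply antitoneOn_of_deriv_nonpos (convex_Ioc 0 1)
      · intro s hs
        exact ((hderiv s hs.1).continuousAt).continuousWithinAt
      · intro s hs
        rw [interior_Ioc] at hs
        exact ((hderiv s hs.1).differentiableAt).differentiableWithinAt
      · intro s hs
        rw [interior_Ioc] at hs
        rw [(hderiv s hs.1).deriv]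
        apply div_nonpos_of_nonpos_of_nonneg
        · have : s - 1 ≤ 0 := by linarith [hs.2]
          exact Odd.pow_nonpos ⟨1, by norm_num⟩ this
        · positivity
    exact hanti ⟨ht, h⟩ (Set.right_mem_Ioc.mpr one_pos) h

/-- Pointwise bound: `y log y - y log x ≥ (y - x) + 3(y-x)²/(2(y+2x))`. -/
lemma pointwise_bound (x y : ℝ) (hx : 0 < x) (hy : 0 ≤ y) :
    (y - x) + 3 * (y - x) ^ 2 / (2 * (y + 2 * x)) ≤
      y * Real.log y - y * Real.log x := by
  rcases eq_or_lt_of_le hy with h | h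
  · subst h
    simp only [zero_mul, sub_zero, zero_sub]
    have h1 : 3 * (-x) ^ 2 / (2 * (0 + 2 * x)) = 3 * x / 4 := by
      field_simp; ring
    rw [h1]
    linarith
  · have ht : 0 < y / x := div_pos h hx
    have hlog := log_ge_rat (y / x) ht
    rw [Real.log_div h.ne' hx.ne'] at hlog
    have hmul := mul_le_mul_of_nonneg_left hlog h.le
    have heq : y * ((y / x - 1) * (5 * (y / x) + 1) / (2 * (y / x) * (y / x + 2)))
        = (y - x) + 3 * (y - x) ^ 2 / (2 * (y + 2 * x)) := by
      have hx' : x ≠ 0 := hx.ne'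
      have hy' : y ≠ 0 := h.ne'
      have hxy : y + 2 * x ≠ 0 := by positivity
      field_simp
      ring
    rw [heq] at hmul
    linarith [hmul, mul_sub y (Real.log y) (Real.log x)]

/-- 1-strong convexity of negative entropy w.r.t. the L1 norm on the simplex. -/
theorem negEntropy_one_strongly_convex (d : ℕ) (x y : Fin d → ℝ)
    (hx0 : ∀ i, 0 < x i) (hx1 : ∑ i, x i = 1)
    (hy0 : ∀ i, 0 ≤ y i) (hy1 : ∑ i, y i = 1) :
    (∑ i, y i * Real.log (y i)) ≥
      (∑ i, x i * Real.log (x i)) + (∑ i, (1 + Real.log (x i)) * (y i - x i))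
        + (1 / 2) * (∑ i, |y i - x i|) ^ 2 := by
  -- rewrite the gradient term
  have hC : ∑ i, (1 + Real.log (x i)) * (y i - x i)
      = ∑ i, y i * Real.log (x i) - ∑ i, x i * Real.log (x i) := by
    have h1 : ∀ i : Fin d, (1 + Real.log (x i)) * (y i - x i)
        = (y i - x i) + (y i * Real.log (x i) - x i * Real.log (x i)) := fun i => by ring
    simp_rw [h1, Finset.sum_add_distrib, Finset.sum_sub_distrib, hx1, hy1]
    ring
  -- pointwise lower bound on KL divergence terms
  have hD : ∑ i, (3 * (y i - x i) ^ 2 / (2 * (y i + 2 * x i)))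
      ≤ ∑ i, (y i * Real.log (y i) - y i * Real.log (x i)) := by
    have := Finset.sum_le_sum (s := Finset.univ)
      (fun i _ => pointwise_bound (x i) (y i) (hx0 i) (hy0 i))
    rw [Finset.sum_add_distrib, Finset.sum_sub_distrib, hx1, hy1] at this
    simpa using this
  -- Sedrakyan / Cauchy-Schwarz
  have hden : ∀ i ∈ Finset.univ, (0:ℝ) < y i + 2 * x i := fun i _ => by
    have := hx0 i; have := hy0 i; linarith
  have hCS := Finset.sq_sum_div_le_sum_sq_div Finset.univ
    (fun i => |y i - x i|) hden
  have hsum3 : ∑ i, (y i + 2 * x i) = 3 := by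
    rw [Finset.sum_add_distrib, hy1, ← Finset.mul_sum, hx1]; norm_num
  rw [hsum3] at hCS
  have habs : ∀ i : Fin d, |y i - x i| ^ 2 / (y i + 2 * x i)
      = (2 / 3) * (3 * (y i - x i) ^ 2 / (2 * (y i + 2 * x i))) := by
    intro i
    have h := (hden i (Finset.mem_univ i)).ne'
    rw [sq_abs]
    field_simp
  simp_rw [habs] at hCS
  rw [← Finset.mul_sum] at hCS
  have hDsum := Finset.sum_sub_distrib (s := Finset.univ)
    (f := fun i => y i * Real.log (y i)) (g := fun i => y i * Real.log (x i))
  rw [hDsum] at hD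
  have hfin : (1 / 2) * (∑ i, |y i - x i|) ^ 2
      ≤ ∑ i, (3 * (y i - x i) ^ 2 / (2 * (y i + 2 * x i))) := by
    nlinarith [hCS]
  linarith [hC, hD, hfin]
end
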